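/- Consider a 2-layer linear MPNN with a virtual node: H^(1) = H + A H W^(0), H^(2) = H^(1) + A H^(1) W^(1) + (1/n)𝟙𝟙ᵀ H Q^(1), followed by Y_2 = Θ̃ Mean(H^(2)). Then for any invertible Θ_1, Θ_2 ∈ ℝ^{d×d} there exist weights W^(0), W^(1), Q^(1), Θ̃ realizing the polynomial filter Y_2 = Θ_1 Mean(AH) + Θ_2 Mean(A²H) with vanishing zeroth-order coefficient (Θ_0 = 0). In particular, there exist nontrivial degree-2 polynomial filters learnable by a linear MPNN+VN but not by a linear MPNN without virtual node. -/

import Mathlib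

open Matrix

private lemma mn_mul {n d : ℕ} (X : Matrix (Fin n) (Fin d) ℝ)
    (W : Matrix (Fin d) (Fin d) ℝ) :
    (fun p => (∑ i, (X * W) i p) / n) = Wᵀ.mulVec (fun p => (∑ i, X i p) / n) := by
  funext p
  simp only [Matrix.mulVec, dotProduct, Matrix.mul_apply, Matrix.transpose_apply]
  rw [Finset.sum_comm, Finset.sum_div]
  refine Finset.sum_congr rfl fun q _ => ?_
  rw [← Finset.sum_mul]
  ring

private lemma mn_add {n d : ℕ} (X Y : Matrix (Fin n) (Fin d) ℝ) :
    (fun p => (∑ i, (X + Y) i p) / n)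
      = (fun p => (∑ i, X i p) / n) + (fun p => (∑ i, Y i p) / n) := by
  funext p
  simp [Finset.sum_add_distrib, add_div]

private lemma mn_J {n d : ℕ} (hn : 0 < n) (H : Matrix (Fin n) (Fin d) ℝ) :
    (fun p => (∑ i, (((1 : ℝ) / n) • (-((Matrix.of fun (_ : Fin n) (_ : Fin n) => (1 : ℝ)) * H))) i p) / n)
      = -(fun p => (∑ i, H i p) / n) := by
  funext p
  have hn' : (n : ℝ) ≠ 0 := Nat.cast_ne_zero.mpr hn.ne'
  simp only [Matrix.smul_apply, Matrix.neg_apply, Matrix.mul_apply, Matrix.of_apply,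
    one_mul, Pi.neg_apply, smul_eq_mul, Finset.sum_const, Finset.card_univ,
    Fintype.card_fin, mul_neg, Finset.sum_neg_distrib, ← Finset.sum_mul, neg_div]
  rw [nsmul_eq_mul]
  field_simp

/-- A 2-layer linear MPNN + VN,
`H⁽¹⁾ = H + AHW⁽⁰⁾`, `H⁽²⁾ = H⁽¹⁾ + AH⁽¹⁾W⁽¹⁾ + (1/n)𝟙𝟙ᵀHQ⁽¹⁾`, `Y₂ = Θ̃ Mean(H⁽²⁾)`:
for any invertible `Θ₁, Θ₂` there exist weights `W⁽⁰⁾, W⁽¹⁾, Q⁽¹⁾, Θ̃` realizing the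
filter `Y₂ = Θ₁ Mean(AH) + Θ₂ Mean(A²H)` with vanishing zeroth-order coefficient
`Θ₀ = Θ̃(I + (Q⁽¹⁾)ᵀ) = 0`. -/
theorem linear_mpnn_vn_realizes_filters_without_zeroth_order
    (n d : ℕ) (hn : 0 < n)
    (A : Matrix (Fin n) (Fin n) ℝ)
    (Θ1 Θ2 : Matrix (Fin d) (Fin d) ℝ)
    (h1 : IsUnit Θ1.det) (h2 : IsUnit Θ2.det) :
    ∃ (W0 W1 Q Θ : Matrix (Fin d) (Fin d) ℝ),
      Θ * (1 + Qᵀ) = 0 ∧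
      ∀ H : Matrix (Fin n) (Fin d) ℝ,
        Θ.mulVec
          (fun p =>
            (∑ i, (((H + A * H * W0) + A * (H + A * H * W0) * W1)
              + ((1 : ℝ) / n) • ((Matrix.of fun (_ : Fin n) (_ : Fin n) => (1 : ℝ)) * H * Q)) i p) / n)
          = Θ1.mulVec (fun p => (∑ i, (A * H) i p) / n)
            + Θ2.mulVec (fun p => (∑ i, (A * A * H) i p) / n) := by
  set B : Matrix (Fin d) (Fin d) ℝ := (2 : ℝ) • (Θ1⁻¹ * Θ2) with hB
  set T : Matrix (Fin d) (Fin d) ℝ := (1 / 4 : ℝ) • (Θ1 * Θ2⁻¹ * Θ1) with hT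
  have h1' : Θ1 * Θ1⁻¹ = 1 := Matrix.mul_nonsing_inv Θ1 h1
  have h2i : Θ2⁻¹ * Θ2 = 1 := Matrix.nonsing_inv_mul Θ2 h2
  have hTB : T * B = (1 / 2 : ℝ) • Θ1 := by
    rw [hT, hB, Matrix.smul_mul, Matrix.mul_smul, smul_smul]
    norm_num
    rw [show Θ1 * Θ2⁻¹ * Θ1 * (Θ1⁻¹ * Θ2) = Θ1 * Θ2⁻¹ * (Θ1 * Θ1⁻¹) * Θ2 by
      simp only [Matrix.mul_assoc], h1', Matrix.mul_one, Matrix.mul_assoc, h2i, Matrix.mul_one]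
  have hTBB : T * B * B = Θ2 := by
    rw [hTB, hB, Matrix.smul_mul, Matrix.mul_smul, smul_smul]
    norm_num
    rw [show Θ1 * (Θ1⁻¹ * Θ2) = Θ1 * Θ1⁻¹ * Θ2 by rw [Matrix.mul_assoc], h1', Matrix.one_mul]
  refine ⟨Bᵀ, Bᵀ, -1, T, ?_, ?_⟩
  · simp
  · intro H
    have key : (fun p =>
        (∑ i, (((H + A * H * Bᵀ) + A * (H + A * H * Bᵀ) * Bᵀ)
          + ((1 : ℝ) / n) • ((Matrix.of fun (_ : Fin n) (_ : Fin n) => (1 : ℝ)) * H * (-1 : Matrix (Fin d) (Fin d) ℝ))) i p) / n)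
        = B.mulVec (fun p => (∑ i, (A * H) i p) / n)
          + B.mulVec (fun p => (∑ i, (A * H) i p) / n)
          + (B * B).mulVec (fun p => (∑ i, (A * A * H) i p) / n) := by
      have e1 : (H + A * H * Bᵀ) + A * (H + A * H * Bᵀ) * Bᵀ
          + ((1 : ℝ) / n) • ((Matrix.of fun (_ : Fin n) (_ : Fin n) => (1 : ℝ)) * H * (-1 : Matrix (Fin d) (Fin d) ℝ))
          = ((H + ((1 : ℝ) / n) • (-((Matrix.of fun (_ : Fin n) (_ : Fin n) => (1 : ℝ)) * H)))
              + A * H * Bᵀ) + (A * H * Bᵀ + A * A * H * (Bᵀ * Bᵀ)) := by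
        rw [Matrix.mul_add, Matrix.add_mul]
        noncomm_ring [Matrix.mul_assoc]
        simp [Matrix.mul_smul, Matrix.mul_one]
      rw [e1, mn_add, mn_add, mn_add, mn_add, mn_mul, mn_mul, mn_J hn H,
        Matrix.transpose_transpose, Matrix.transpose_mul, Matrix.transpose_transpose]
      abel
    have hadd : T * B + T * B = Θ1 := by
      rw [hTB]; ext i j; simp [Matrix.smul_apply]; ring
    rw [key, Matrix.mulVec_add, Matrix.mulVec_add, Matrix.mulVec_mulVec, Matrix.mulVec_mulVec,
      ← Matrix.mul_assoc, hTBB, ← Matrix.add_mulVec, hadd]
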